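/- Let v be a time-dependent C¹ velocity field on ℝ³ with flow map α, let ρ be C¹ and satisfy the continuity equation ∂_t ρ + v^a ∂_a ρ = −ρ ∂_a v^a, and let G be a bounded open set with 0 < vol(G) < ∞. Then the volume-averaged density ⟨ρ⟩(t) = V(t)^{-1} ∫_{G_t} ρ(t,x) d³x is differentiable and satisfies the exact coarse-grained continuity equation d/dt ⟨ρ⟩(t) = −⟨ρ⟩(t) · ⟨div v⟩(t), where ⟨div v⟩(t) = V(t)^{-1} ∫_{G_t} ∂_a v^a(t,x) d³x. -/

import Mathlib

open MeasureTheory Real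
open scoped ENNReal
noncomputable section

/-- ℝ³ with Cartesian coordinates. -/
abbrev V3 := Fin 3 → ℝ

/-- Partial derivative `∂_i f (x)` of a scalar function on ℝ³. -/
def pd (f : V3 → ℝ) (i : Fin 3) (x : V3) : ℝ := fderiv ℝ f x (Pi.single i 1)

/-- `α` is a comoving flow map for the time-dependent velocity field `v` with
initial time `t₀`: `α(t₀,·) = id`, each `α(t,·)` is a C¹ diffeomorphism of ℝ³,
and `∂ₜ α(t,x) = v(t, α(t,x))`. -/
def IsFlowMap (v : ℝ → V3 → V3) (t₀ : ℝ) (α : ℝ → V3 → V3) : Prop :=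
  (∀ x, α t₀ x = x) ∧
  (∀ t, Function.Bijective (α t) ∧ ContDiff ℝ 1 (α t) ∧
    ContDiff ℝ 1 (Function.invFun (α t))) ∧
  (∀ t x, HasDerivAt (fun s => α s x) (v t (α t x)) t)

/-- The volume of the comoving domain `G_t = α(t,G)`. -/
def volAt (α : ℝ → V3 → V3) (G : Set V3) (t : ℝ) : ℝ := (volume (α t '' G)).toReal

/-- Volume average of a time-dependent function over the comoving domain. -/
def avg (α : ℝ → V3 → V3) (G : Set V3) (f : ℝ → V3 → ℝ) (t : ℝ) : ℝ :=
  (volAt α G t)⁻¹ * ∫ x in α t '' G, f t x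

open Set Filter Topology

section Gronwall
variable {E : Type*} [NormedAddCommGroup E] [NormedSpace ℝ E]

theorem gronwall_one {f f' : ℝ → E} {a b K δ : ℝ}
    (hf : ∀ s ∈ Icc a b, HasDerivAt f (f' s) s)
    (hb : ∀ s ∈ Icc a b, ‖f' s‖ ≤ K * ‖f s‖)
    (hδ : ‖f a‖ ≤ δ) (hab : a ≤ b) : ∀ t ∈ Icc a b, ‖f t‖ ≤ δ * Real.exp (K * (t - a)) := by
  intro t ht
  have := norm_le_gronwallBound_of_norm_deriv_right_le (f := f) (f' := f') (δ := δ) (K := K)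
    (ε := 0) (a := a) (b := b)
    (fun s hs => ((hf s hs).continuousAt.continuousWithinAt))
    (fun s hs => (hf s (Ico_subset_Icc_self hs)).hasDerivWithinAt)
    hδ (fun s hs => by simpa using hb s (Ico_subset_Icc_self hs)) t ht
  rwa [gronwallBound_ε0] at this

theorem gronwall_two {f f' : ℝ → E} {t₀ t K δ : ℝ}
    (hf : ∀ s ∈ uIcc t₀ t, HasDerivAt f (f' s) s)
    (hb : ∀ s ∈ uIcc t₀ t, ‖f' s‖ ≤ K * ‖f s‖)
    (hδ : ‖f t₀‖ ≤ δ) : ‖f t‖ ≤ δ * Real.exp (K * |t - t₀|) := by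
  rcases le_total t₀ t with h | h
  · rw [abs_of_nonneg (by linarith)]
    exact gronwall_one (fun s hs => hf s (by rwa [uIcc_of_le h]))
      (fun s hs => hb s (by rwa [uIcc_of_le h])) hδ h t (by simp [h])
  · -- reverse time
    set g : ℝ → E := fun s => f (t₀ + t - s) with hg
    have hgd : ∀ s ∈ Icc t t₀, HasDerivAt g (-(f' (t₀ + t - s))) s := by
      intro s hs
      have hu : HasDerivAt (fun s : ℝ => t₀ + t - s) (-1) s := by
        simpa using (hasDerivAt_id s).const_sub (t₀ + t)
      have h2 := (hf _ (by
        rw [uIcc_of_ge h]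
        cases hs
        constructor <;> linarith)).scomp s hu
      rw [neg_one_smul] at h2
      exact h2
    have hgb : ∀ s ∈ Icc t t₀, ‖-(f' (t₀ + t - s))‖ ≤ K * ‖g s‖ := by
      intro s hs
      rw [norm_neg]
      exact hb _ (by rw [uIcc_of_ge h]; cases hs; constructor <;> linarith)
    have hga : ‖g t‖ ≤ δ := by simpa [hg] using hδ
    have := gronwall_one hgd hgb hga h t₀ (by simp [h])
    simpa [hg, abs_of_nonpos (by linarith : t - t₀ ≤ 0)] using this

end Gronwall

section Partial
variable {E F : Type*} [NormedAddCommGroup E] [NormedSpace ℝ E]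
  [NormedAddCommGroup F] [NormedSpace ℝ F]

/-- spatial partial fderiv of a jointly C¹ function -/
def pB (f : ℝ × E → F) (t : ℝ) (x : E) : E →L[ℝ] F :=
  (fderiv ℝ f (t, x)).comp ((0 : E →L[ℝ] ℝ).prod (ContinuousLinearMap.id ℝ E))

/-- time partial derivative -/
def pT (f : ℝ × E → F) (t : ℝ) (x : E) : F := fderiv ℝ f (t, x) (1, 0)

theorem hasDerivAt_curve {f : ℝ × E → F} (hf : ContDiff ℝ 1 f) {c : ℝ → E} {c' : E} {t : ℝ}
    (hc : HasDerivAt c c' t) :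
    HasDerivAt (fun s => f (s, c s)) (pT f t (c t) + pB f t (c t) c') t := by
  have hD : HasFDerivAt f (fderiv ℝ f (t, c t)) (t, c t) :=
    (hf.differentiable one_ne_zero (t, c t)).hasFDerivAt
  have hcu : HasDerivAt (fun s => (s, c s)) ((1 : ℝ), c') t := (hasDerivAt_id t).prodMk hc
  have := hD.comp_hasDerivAt t hcu
  convert this using 1
  · rfl
  rw [show ((1 : ℝ), c') = ((1 : ℝ), (0 : E)) + ((0 : ℝ), c') by simp, map_add]
  rfl

theorem hasFDerivAt_partial {f : ℝ × E → F} (hf : ContDiff ℝ 1 f) (t : ℝ) (x : E) :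
    HasFDerivAt (fun y => f (t, y)) (pB f t x) x := by
  have hD : HasFDerivAt f (fderiv ℝ f (t, x)) (t, x) :=
    (hf.differentiable one_ne_zero (t, x)).hasFDerivAt
  have hg : HasFDerivAt (fun y : E => ((t : ℝ), y))
      (((0 : E →L[ℝ] ℝ).prod (ContinuousLinearMap.id ℝ E))) x :=
    (hasFDerivAt_const t x).prodMk (hasFDerivAt_id x)
  exact hD.comp x hg

theorem continuous_pB {f : ℝ × E → F} (hf : ContDiff ℝ 1 f) :
    Continuous (fun p : ℝ × E => pB f p.1 p.2) := by
  have := (hf.continuous_fderiv one_ne_zero)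
  exact (this.comp continuous_id).clm_comp continuous_const

theorem continuous_pT {f : ℝ × E → F} (hf : ContDiff ℝ 1 f) :
    Continuous (fun p : ℝ × E => pT f p.1 p.2) := by
  have := (hf.continuous_fderiv one_ne_zero)
  exact this.clm_apply continuous_const

end Partial

section Reverse

theorem isFlowMap_reverse {v : ℝ → V3 → V3} {t₀ : ℝ} {α : ℝ → V3 → V3}
    (hα : IsFlowMap v t₀ α) :
    IsFlowMap (fun s x => -v (2 * t₀ - s) x) t₀ (fun s x => α (2 * t₀ - s) x) := by
  obtain ⟨h1, h2, h3⟩ := hα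
  refine ⟨fun x => by show α (2 * t₀ - t₀) x = x; rw [show 2 * t₀ - t₀ = t₀ by ring]; exact h1 x, fun t => by simpa using h2 (2 * t₀ - t), ?_⟩
  intro t x
  have hu : HasDerivAt (fun s : ℝ => 2 * t₀ - s) (-1) t := by
    simpa using (hasDerivAt_id t).const_sub (2 * t₀)
  have h4 := (h3 (2 * t₀ - t) x).scomp t hu
  rw [neg_one_smul] at h4
  exact h4

theorem contDiff_reverse {v : ℝ → V3 → V3} (hv : ContDiff ℝ 1 (fun p : ℝ × V3 => v p.1 p.2))
    {t₀ : ℝ} : ContDiff ℝ 1 (fun p : ℝ × V3 => -v (2 * t₀ - p.1) p.2) := by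
  have haff : ContDiff ℝ 1 (fun p : ℝ × V3 => ((2 * t₀ - p.1 : ℝ), p.2)) :=
    (contDiff_const.sub contDiff_fst).prodMk contDiff_snd
  exact (hv.comp haff).neg

end Reverse

section C3
/-- Lipschitz bound for `v s` between points of the 1-thickening of a compact set,
valid for a point in `T` and any point within distance 1 of it. -/
theorem lip_near {v : ℝ → V3 → V3} (hv : ContDiff ℝ 1 (fun p : ℝ × V3 => v p.1 p.2))
    (T : Set V3) (hT : IsCompact T) (a b : ℝ) :
    ∃ L ≥ 0, ∀ s ∈ Icc a b, ∀ p ∈ T, ∀ q, dist q p ≤ 1 →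
      ‖v s q - v s p‖ ≤ L * dist q p := by
  set vU : ℝ × V3 → V3 := fun p => v p.1 p.2 with hvU
  have hK : IsCompact ((Icc a b) ×ˢ (Metric.cthickening 1 T)) :=
    (isCompact_Icc).prod (hT.cthickening)
  obtain ⟨L, hL⟩ := hK.exists_bound_of_continuousOn
    ((continuous_pB hv).continuousOn (s := (Icc a b) ×ˢ (Metric.cthickening 1 T)))
  refine ⟨max L 0, le_max_right _ _, ?_⟩
  intro s hs p hp q hq
  have hball : Metric.closedBall p 1 ⊆ Metric.cthickening 1 T := by
    intro z hz
    exact Metric.mem_cthickening_of_dist_le z p 1 T hp (Metric.mem_closedBall.1 hz)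
  have hder : ∀ z ∈ Metric.closedBall p 1,
      HasFDerivWithinAt (v s) (pB vU s z) (Metric.closedBall p 1) z :=
    fun z _ => (hasFDerivAt_partial hv s z).hasFDerivWithinAt
  have hbd : ∀ z ∈ Metric.closedBall p 1, ‖pB vU s z‖ ≤ max L 0 :=
    fun z hz => le_trans (hL (s, z) ⟨hs, hball hz⟩) (le_max_left _ _)
  have := (convex_closedBall p 1).norm_image_sub_le_of_norm_hasFDerivWithin_le hder hbd
    (Metric.mem_closedBall_self zero_le_one) (Metric.mem_closedBall.2 hq)
  rwa [← dist_eq_norm] at this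
end C3

section C4
theorem key_onesided {v : ℝ → V3 → V3} (hv : ContDiff ℝ 1 (fun p : ℝ × V3 => v p.1 p.2))
    {t₀ : ℝ} {α : ℝ → V3 → V3} (hα : IsFlowMap v t₀ α) (x₀ : V3) (b : ℝ) (hb : t₀ ≤ b) :
    ∃ ε > 0, ∃ C ≥ 1, ∀ y, dist y x₀ ≤ ε → ∀ s ∈ Icc t₀ b,
      dist (α s y) (α s x₀) ≤ C * dist y x₀ ∧ dist (α s y) (α s x₀) ≤ 1 / 2 := by
  obtain ⟨h1, h2, h3⟩ := hα
  have hcont0 : ContinuousOn (fun s => α s x₀) (Icc t₀ b) :=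
    fun s _ => ((h3 s x₀).continuousAt).continuousWithinAt
  have hT : IsCompact ((fun s => α s x₀) '' Icc t₀ b) :=
    (isCompact_Icc).image_of_continuousOn hcont0
  obtain ⟨L, hL0, hLip⟩ := lip_near hv _ hT t₀ b
  set C : ℝ := Real.exp (L * (b - t₀)) with hC
  have hCpos : 0 < C := Real.exp_pos _
  have hC1 : 1 ≤ C := Real.one_le_exp (mul_nonneg hL0 (by linarith))
  refine ⟨1 / (4 * C), by positivity, C, hC1, ?_⟩
  intro y hy
  have hy4 : dist y x₀ ≤ 1 / 4 :=
    le_trans hy (one_div_le_one_div_of_le (by norm_num) (by linarith))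
  have hq : dist y x₀ * C ≤ 1 / 4 := by
    calc dist y x₀ * C ≤ 1 / (4 * C) * C := mul_le_mul_of_nonneg_right hy hCpos.le
    _ = 1 / 4 := by field_simp
  set w : ℝ → V3 := fun s => α s y - α s x₀ with hw
  have hwd : ∀ s, HasDerivAt w (v s (α s y) - v s (α s x₀)) s :=
    fun s => (h3 s y).sub (h3 s x₀)
  have hwc : Continuous w := by
    have hdiff : Differentiable ℝ w := fun s => (hwd s).differentiableAt
    exact hdiff.continuous
  have hw0 : ‖w t₀‖ = dist y x₀ := by
    simp only [hw, h1 y, h1 x₀]; rw [dist_eq_norm]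
  have grw : ∀ s ∈ Icc t₀ b, (∀ u ∈ Icc t₀ s, ‖w u‖ ≤ 1 / 2) →
      ∀ u ∈ Icc t₀ s, ‖w u‖ ≤ dist y x₀ * C := by
    intro s hs hcontain u hu
    have hsub : Icc t₀ s ⊆ Icc t₀ b := Icc_subset_Icc le_rfl hs.2
    have hbd : ∀ u ∈ Icc t₀ s, ‖v u (α u y) - v u (α u x₀)‖ ≤ L * ‖w u‖ := by
      intro u hu'
      have hmem : α u x₀ ∈ (fun s => α s x₀) '' Icc t₀ b := ⟨u, hsub hu', rfl⟩
      have hd1 : dist (α u y) (α u x₀) ≤ 1 := by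
        rw [dist_eq_norm]; exact le_trans (hcontain u hu') (by norm_num)
      have := hLip u (hsub hu') _ hmem _ hd1
      rwa [dist_eq_norm] at this
    have := gronwall_one (fun u _ => hwd u) hbd hw0.le hs.1 u hu
    refine le_trans this ?_
    have : Real.exp (L * (u - t₀)) ≤ C :=
      Real.exp_le_exp.2 (mul_le_mul_of_nonneg_left (by linarith [hu.2, hs.2]) hL0)
    exact mul_le_mul_of_nonneg_left this dist_nonneg
  set S : Set ℝ := {s | s ∈ Icc t₀ b ∧ ∀ u ∈ Icc t₀ s, ‖w u‖ ≤ 1 / 2} with hS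
  have ht₀S : t₀ ∈ S := by
    refine ⟨⟨le_rfl, hb⟩, fun u hu => ?_⟩
    have : u = t₀ := le_antisymm hu.2 hu.1
    rw [this, hw0]; linarith
  have hS_bdd : BddAbove S := ⟨b, fun s hs => hs.1.2⟩
  set c := sSup S with hc
  have hcIcc : c ∈ Icc t₀ b := ⟨le_csSup hS_bdd ht₀S, csSup_le ⟨t₀, ht₀S⟩ fun s hs => hs.1.2⟩
  have hIco : ∀ u ∈ Ico t₀ c, ‖w u‖ ≤ 1 / 2 := by
    intro u hu
    obtain ⟨s, hsS, hus⟩ := exists_lt_of_lt_csSup ⟨t₀, ht₀S⟩ hu.2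
    exact hsS.2 u ⟨hu.1, hus.le⟩
  have hcS : c ∈ S := by
    refine ⟨hcIcc, fun u hu => ?_⟩
    rcases lt_or_eq_of_le hu.2 with hlt | heq
    · exact hIco u ⟨hu.1, hlt⟩
    · rcases eq_or_lt_of_le hcIcc.1 with h0 | h0
      · rw [heq, ← h0, hw0]; linarith
      · have htend : Filter.Tendsto (fun z => ‖w z‖) (nhdsWithin c (Iio c)) (nhds ‖w c‖) :=
          ((hwc.norm.tendsto c).mono_left nhdsWithin_le_nhds)
        rw [heq]
        refine le_of_tendsto htend ?_
        filter_upwards [Ico_mem_nhdsLT h0] with z hz using hIco z hz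
  have hcb : c = b := by
    by_contra hne
    have hcb' : c < b := lt_of_le_of_ne hcIcc.2 hne
    have hwc14 : ∀ u ∈ Icc t₀ c, ‖w u‖ ≤ 1 / 4 :=
      fun u hu => le_trans (grw c hcIcc hcS.2 u hu) hq
    have hwc2 : ‖w c‖ < 1 / 2 := lt_of_le_of_lt (hwc14 c ⟨hcIcc.1, le_rfl⟩) (by norm_num)
    have hev : ∀ᶠ z in nhds c, ‖w z‖ < 1 / 2 :=
      (hwc.norm.tendsto c).eventually_lt_const hwc2
    obtain ⟨δ, hδ0, hδ⟩ := Metric.eventually_nhds_iff.1 hev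
    set s' := min b (c + δ / 2) with hs'
    have hcs' : c < s' := lt_min hcb' (by linarith)
    have hs'S : s' ∈ S := by
      refine ⟨⟨le_trans hcIcc.1 hcs'.le, min_le_left _ _⟩, fun u hu => ?_⟩
      rcases le_or_gt u c with h | h
      · exact hcS.2 u ⟨hu.1, h⟩
      · have hd : dist u c < δ := by
          rw [Real.dist_eq, abs_of_pos (by linarith)]
          have : u ≤ c + δ / 2 := le_trans hu.2 (min_le_right _ _)
          linarith
        exact (hδ hd).le
    have := le_csSup hS_bdd hs'S
    linarith
  intro s hs
  have hcont : ∀ u ∈ Icc t₀ b, ‖w u‖ ≤ 1 / 2 := hcb ▸ hcS.2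
  have h1' := grw b ⟨hb, le_rfl⟩ hcont s hs
  refine ⟨?_, ?_⟩
  · rw [dist_eq_norm]; rw [mul_comm] at h1'; exact h1'
  · rw [dist_eq_norm]; exact hcont s hs
end C4

section C5
theorem key {v : ℝ → V3 → V3} (hv : ContDiff ℝ 1 (fun p : ℝ × V3 => v p.1 p.2))
    {t₀ : ℝ} {α : ℝ → V3 → V3} (hα : IsFlowMap v t₀ α) (x₀ : V3) (a b : ℝ)
    (ha : a ≤ t₀) (hb : t₀ ≤ b) :
    ∃ ε > 0, ∃ C ≥ 1, ∀ y, dist y x₀ ≤ ε → ∀ s ∈ Icc a b,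
      dist (α s y) (α s x₀) ≤ C * dist y x₀ ∧ dist (α s y) (α s x₀) ≤ 1 / 2 := by
  obtain ⟨ε₁, hε₁, C₁, hC₁, H₁⟩ := key_onesided hv hα x₀ b hb
  obtain ⟨ε₂, hε₂, C₂, hC₂, H₂⟩ :=
    key_onesided (contDiff_reverse hv (t₀ := t₀)) (isFlowMap_reverse hα) x₀ (2 * t₀ - a)
      (by linarith)
  refine ⟨min ε₁ ε₂, lt_min hε₁ hε₂, max C₁ C₂, le_trans hC₁ (le_max_left _ _), ?_⟩
  intro y hy s hs
  rcases le_total t₀ s with h | h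
  · obtain ⟨k1, k2⟩ := H₁ y (le_trans hy (min_le_left _ _)) s ⟨h, hs.2⟩
    exact ⟨le_trans k1 (mul_le_mul_of_nonneg_right (le_max_left _ _) dist_nonneg), k2⟩
  · have hmem : 2 * t₀ - s ∈ Icc t₀ (2 * t₀ - a) := ⟨by linarith, by linarith [hs.1]⟩
    obtain ⟨k1, k2⟩ := H₂ y (le_trans hy (min_le_right _ _)) (2 * t₀ - s) hmem
    have hss : 2 * t₀ - (2 * t₀ - s) = s := by ring
    rw [hss] at k1 k2
    exact ⟨le_trans k1 (mul_le_mul_of_nonneg_right (le_max_right _ _) dist_nonneg), k2⟩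

theorem alpha_cont {v : ℝ → V3 → V3} (hv : ContDiff ℝ 1 (fun p : ℝ × V3 => v p.1 p.2))
    {t₀ : ℝ} {α : ℝ → V3 → V3} (hα : IsFlowMap v t₀ α) :
    Continuous (fun p : ℝ × V3 => α p.1 p.2) := by
  rw [continuous_iff_continuousAt]
  rintro ⟨t₁, x₀⟩
  obtain ⟨ε, hε, C, hC, H⟩ := key hv hα x₀ (min (t₁ - 1) t₀) (max (t₁ + 1) t₀)
    (min_le_right _ _) (le_max_right _ _)
  have hC0 : 0 < C := lt_of_lt_of_le one_pos hC
  rw [Metric.continuousAt_iff]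
  intro η hη
  have hcx : ContinuousAt (fun s => α s x₀) t₁ := (hα.2.2 t₁ x₀).continuousAt
  obtain ⟨δ₁, hδ₁, Hδ₁⟩ := Metric.continuousAt_iff.1 hcx (η / 2) (by linarith)
  refine ⟨min ε (min δ₁ (min 1 (η / (2 * C)))), by positivity, ?_⟩
  rintro ⟨s, y⟩ hd
  rw [Prod.dist_eq] at hd
  have hds : dist s t₁ < min ε (min δ₁ (min 1 (η / (2 * C)))) := lt_of_le_of_lt (le_max_left _ _) hd
  have hdy : dist y x₀ < min ε (min δ₁ (min 1 (η / (2 * C)))) := lt_of_le_of_lt (le_max_right _ _) hd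
  have hsIcc : s ∈ Icc (min (t₁ - 1) t₀) (max (t₁ + 1) t₀) := by
    have h1 : dist s t₁ < 1 := lt_of_lt_of_le hds (le_trans (min_le_right _ _)
      (le_trans (min_le_right _ _) (min_le_left _ _)))
    rw [Real.dist_eq, abs_lt] at h1
    constructor
    · exact le_trans (min_le_left _ _) (by linarith)
    · exact le_trans (by linarith) (le_max_left _ _)
  obtain ⟨k1, _⟩ := H y (le_of_lt (lt_of_lt_of_le hdy (min_le_left _ _))) s hsIcc
  calc dist (α s y) (α t₁ x₀) ≤ dist (α s y) (α s x₀) + dist (α s x₀) (α t₁ x₀) :=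
        dist_triangle _ _ _
    _ < η / 2 + η / 2 := by
        apply add_lt_add_of_le_of_lt
        · refine le_trans k1 ?_
          have : dist y x₀ ≤ η / (2 * C) := le_of_lt (lt_of_lt_of_le hdy
            (le_trans (min_le_right _ _) (le_trans (min_le_right _ _) (min_le_right _ _))))
          calc C * dist y x₀ ≤ C * (η / (2 * C)) := mul_le_mul_of_nonneg_left this hC0.le
            _ = η / 2 := by field_simp
        · exact Hδ₁ (lt_of_lt_of_le hds (le_trans (min_le_right _ _) (min_le_left _ _)))
    _ = η := by ring
end C5

section C6
/-- integrand in the variational integral identity -/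
def psiF (v : ℝ → V3 → V3) (α : ℝ → V3 → V3) (x e : V3) (s : ℝ) : V3 :=
  pB (fun p : ℝ × V3 => v p.1 p.2) s (α s x) (fderiv ℝ (α s) x e)

variable {v : ℝ → V3 → V3} {t₀ : ℝ} {α : ℝ → V3 → V3}

theorem slope_aux (hv : ContDiff ℝ 1 (fun p : ℝ × V3 => v p.1 p.2)) (hα : IsFlowMap v t₀ α)
    (x e : V3) {h : ℕ → ℝ} (hne : ∀ n, h n ≠ 0) (h0 : Tendsto h atTop (𝓝 0)) (s : ℝ) :
    Tendsto (fun n => (h n)⁻¹ • (v s (α s (x + h n • e)) - v s (α s x))) atTop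
      (𝓝 (psiF v α x e s)) := by
  have hcα : ContDiff ℝ 1 (α s) := (hα.2.1 s).2.1
  have hpt : x + (0 : ℝ) • e = x := by simp
  have hc0 : HasDerivAt (fun τ : ℝ => x + τ • e) e 0 := by
    simpa using ((hasDerivAt_id (0 : ℝ)).smul_const e).const_add x
  have hdα : HasFDerivAt (α s) (fderiv ℝ (α s) x) (x + (0 : ℝ) • e) := by
    rw [hpt]; exact (hcα.differentiable one_ne_zero x).hasFDerivAt
  have d1 : HasDerivAt (fun τ : ℝ => α s (x + τ • e)) (fderiv ℝ (α s) x e) 0 :=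
    hdα.comp_hasDerivAt 0 hc0
  have hdv : HasFDerivAt (v s) (pB (fun p : ℝ × V3 => v p.1 p.2) s (α s x))
      (α s (x + (0 : ℝ) • e)) := by
    rw [hpt]; exact hasFDerivAt_partial hv s (α s x)
  have d2 : HasDerivAt (fun τ : ℝ => v s (α s (x + τ • e)))
      (pB (fun p : ℝ × V3 => v p.1 p.2) s (α s x) (fderiv ℝ (α s) x e)) 0 :=
    hdv.comp_hasDerivAt 0 d1
  have hslope := hasDerivAt_iff_tendsto_slope_zero.1 d2
  have hh : Tendsto h atTop (𝓝[≠] (0 : ℝ)) :=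
    tendsto_nhdsWithin_of_tendsto_nhds_of_eventually_within _ h0
      (Eventually.of_forall fun n => hne n)
  have := hslope.comp hh
  refine this.congr fun n => ?_
  simp only [Function.comp_apply, zero_add, hpt]

theorem psiF_props (hv : ContDiff ℝ 1 (fun p : ℝ × V3 => v p.1 p.2)) (hα : IsFlowMap v t₀ α)
    (x e : V3) (a b : ℝ) (ha : a ≤ t₀) (hb : t₀ ≤ b) :
    ∃ M, 0 ≤ M ∧ (∀ s ∈ Icc a b, ‖psiF v α x e s‖ ≤ M) ∧
      ∀ t ∈ Icc a b, fderiv ℝ (α t) x e = e + ∫ s in t₀..t, psiF v α x e s := by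
  obtain ⟨h1, h2, h3⟩ := hα
  obtain ⟨ε, hε, C, hC, HK⟩ := key hv ⟨h1, h2, h3⟩ x a b ha hb
  have hcont0 : ContinuousOn (fun s => α s x) (Icc a b) :=
    fun s _ => ((h3 s x).continuousAt).continuousWithinAt
  have hT : IsCompact ((fun s => α s x) '' Icc a b) :=
    (isCompact_Icc).image_of_continuousOn hcont0
  obtain ⟨L, hL0, hLip⟩ := lip_near hv _ hT a b
  set h : ℕ → ℝ := fun n => ε / ((‖e‖ + 1) * (n + 1)) with hh
  have hpos : ∀ n, 0 < h n := fun n => by positivity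
  have hne : ∀ n, h n ≠ 0 := fun n => (hpos n).ne'
  have h0 : Tendsto h atTop (𝓝 0) := by
    rw [hh]
    simp only [div_eq_mul_inv, mul_inv]
    rw [show (0:ℝ) = ε * ((‖e‖ + 1)⁻¹ * 0) by ring]
    exact (tendsto_const_nhds.mul (tendsto_const_nhds.mul
      (tendsto_inv_atTop_zero.comp (tendsto_atTop_add_const_right atTop 1 tendsto_natCast_atTop_atTop))))
  have hdist : ∀ n, dist (x + h n • e) x ≤ ε := by
    intro n
    rw [dist_eq_norm, add_sub_cancel_left, norm_smul, Real.norm_eq_abs,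
      abs_of_pos (hpos n)]
    rw [hh]
    rw [div_mul_eq_mul_div, div_le_iff₀ (by positivity)]
    have h1e : ‖e‖ ≤ (‖e‖ + 1) * (n + 1) := by
      have h01 : (0:ℝ) ≤ (n:ℝ) := Nat.cast_nonneg n
      nlinarith [norm_nonneg e]
    nlinarith [hε.le]
  set F : ℕ → ℝ → V3 :=
    fun n s => (h n)⁻¹ • (v s (α s (x + h n • e)) - v s (α s x)) with hF
  have hay : ∀ y0 : V3, Continuous (fun s => α s y0) :=
    fun y0 => (alpha_cont hv ⟨h1, h2, h3⟩).comp (continuous_id.prodMk continuous_const)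
  have hvy : ∀ y0, Continuous (fun s => v s (α s y0)) :=
    fun y0 => hv.continuous.comp (continuous_id.prodMk (hay y0))
  have hFc : ∀ n, Continuous (F n) := fun n => (((hvy (x + h n • e)).sub (hvy x)).const_smul (h n)⁻¹)
  have hFb : ∀ n, ∀ s ∈ Icc a b, ‖F n s‖ ≤ L * (C * ‖e‖) := by
    intro n s hs
    obtain ⟨k1, k2⟩ := HK (x + h n • e) (hdist n) s hs
    have hq1 : dist (α s (x + h n • e)) (α s x) ≤ 1 := le_trans k2 (by norm_num)
    have hlip := hLip s hs (α s x) ⟨s, hs, rfl⟩ (α s (x + h n • e)) hq1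
    rw [hF]
    rw [norm_smul, Real.norm_eq_abs, abs_inv, abs_of_pos (hpos n)]
    have hd : dist (x + h n • e) x = h n * ‖e‖ := by
      rw [dist_eq_norm, add_sub_cancel_left, norm_smul, Real.norm_eq_abs, abs_of_pos (hpos n)]
    have : ‖v s (α s (x + h n • e)) - v s (α s x)‖ ≤ L * (C * (h n * ‖e‖)) := by
      calc ‖v s (α s (x + h n • e)) - v s (α s x)‖ ≤ L * dist (α s (x + h n • e)) (α s x) := hlip
        _ ≤ L * (C * (h n * ‖e‖)) := by
            refine mul_le_mul_of_nonneg_left ?_ hL0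
            rw [← hd]; exact k1
    calc (h n)⁻¹ * ‖v s (α s (x + h n • e)) - v s (α s x)‖
        ≤ (h n)⁻¹ * (L * (C * (h n * ‖e‖))) :=
          mul_le_mul_of_nonneg_left this (by positivity)
      _ = L * (C * ‖e‖) := by have := hne n; field_simp
  have hlim : ∀ s, Tendsto (fun n => F n s) atTop (𝓝 (psiF v α x e s)) :=
    fun s => slope_aux hv ⟨h1, h2, h3⟩ x e hne h0 s
  refine ⟨L * (C * ‖e‖), by positivity, ?_, ?_⟩
  · intro s hs
    exact le_of_tendsto (hlim s).norm (Eventually.of_forall fun n => hFb n s hs)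
  · intro t ht
    -- FTC for each difference quotient
    have hftc : ∀ n, (h n)⁻¹ • (α t (x + h n • e) - α t x) = e + ∫ s in t₀..t, F n s := by
      intro n
      have hder : ∀ s ∈ uIcc t₀ t, HasDerivAt
          (fun s => (h n)⁻¹ • (α s (x + h n • e) - α s x)) (F n s) s :=
        fun s _ => (((h3 s (x + h n • e)).sub (h3 s x)).const_smul (h n)⁻¹)
      have hint : IntervalIntegrable (F n) volume t₀ t := (hFc n).intervalIntegrable t₀ t
      have := intervalIntegral.integral_eq_sub_of_hasDerivAt hder hint
      rw [this]
      have hstart : (h n)⁻¹ • (α t₀ (x + h n • e) - α t₀ x) = e := by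
        rw [h1, h1, add_sub_cancel_left, smul_smul, inv_mul_cancel₀ (hne n), one_smul]
      rw [hstart]
      abel
    -- limit of LHS
    have hL1 : Tendsto (fun n => (h n)⁻¹ • (α t (x + h n • e) - α t x)) atTop
        (𝓝 (fderiv ℝ (α t) x e)) := by
      have hcα : ContDiff ℝ 1 (α t) := (h2 t).2.1
      have hpt : x + (0 : ℝ) • e = x := by simp
      have hc0 : HasDerivAt (fun τ : ℝ => x + τ • e) e 0 := by
        simpa using ((hasDerivAt_id (0 : ℝ)).smul_const e).const_add x
      have hdα : HasFDerivAt (α t) (fderiv ℝ (α t) x) (x + (0 : ℝ) • e) := by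
        rw [hpt]; exact (hcα.differentiable one_ne_zero x).hasFDerivAt
      have d1 : HasDerivAt (fun τ : ℝ => α t (x + τ • e)) (fderiv ℝ (α t) x e) 0 :=
        hdα.comp_hasDerivAt 0 hc0
      have hslope := hasDerivAt_iff_tendsto_slope_zero.1 d1
      have hhh : Tendsto h atTop (𝓝[≠] (0 : ℝ)) :=
        tendsto_nhdsWithin_of_tendsto_nhds_of_eventually_within _ h0
          (Eventually.of_forall fun n => hne n)
      refine (hslope.comp hhh).congr fun n => ?_
      simp only [Function.comp_apply, zero_add, hpt]
    -- limit of RHS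
    have hsub : uIoc t₀ t ⊆ Icc a b := by
      intro u hu
      exact ⟨le_trans (le_min ha ht.1) (le_of_lt hu.1), le_trans hu.2 (max_le hb ht.2)⟩
    have hmeasn : ∀ n, AEStronglyMeasurable (F n) (volume.restrict (uIoc t₀ t)) :=
      fun n => (hFc n).aestronglyMeasurable.restrict
    have hRHS : Tendsto (fun n => ∫ s in t₀..t, F n s) atTop
        (𝓝 (∫ s in t₀..t, psiF v α x e s)) := by
      refine intervalIntegral.tendsto_integral_filter_of_dominated_convergence
        (fun _ => L * (C * ‖e‖)) (Eventually.of_forall hmeasn)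
        (Eventually.of_forall fun n => (ae_of_all _ fun s hs => hFb n s (hsub hs)))
        intervalIntegrable_const (ae_of_all _ fun s _ => hlim s)
    have hL1' : Tendsto (fun n => (h n)⁻¹ • (α t (x + h n • e) - α t x)) atTop
        (𝓝 (e + ∫ s in t₀..t, psiF v α x e s)) := by
      have : (fun n => (h n)⁻¹ • (α t (x + h n • e) - α t x))
          = fun n => e + ∫ s in t₀..t, F n s := funext fun n => hftc n
      rw [this]
      exact tendsto_const_nhds.add hRHS
    exact tendsto_nhds_unique hL1 hL1'

theorem psiF_meas (hv : ContDiff ℝ 1 (fun p : ℝ × V3 => v p.1 p.2)) (hα : IsFlowMap v t₀ α)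
    (x e : V3) : StronglyMeasurable (psiF v α x e) := by
  set h : ℕ → ℝ := fun n => ((n : ℝ) + 1)⁻¹ with hh
  have hne : ∀ n, h n ≠ 0 := fun n => by positivity
  have h0 : Tendsto h atTop (𝓝 0) := by
    have := tendsto_one_div_add_atTop_nhds_zero_nat (𝕜 := ℝ)
    simpa [hh, one_div] using this
  set F : ℕ → ℝ → V3 :=
    fun n s => (h n)⁻¹ • (v s (α s (x + h n • e)) - v s (α s x)) with hF
  have hay : ∀ y0 : V3, Continuous (fun s => α s y0) :=
    fun y0 => (alpha_cont hv hα).comp (continuous_id.prodMk continuous_const)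
  have hvy : ∀ y0, Continuous (fun s => v s (α s y0)) :=
    fun y0 => hv.continuous.comp (continuous_id.prodMk (hay y0))
  have hFc : ∀ n, Continuous (F n) := fun n => (((hvy (x + h n • e)).sub (hvy x)).const_smul (h n)⁻¹)
  exact stronglyMeasurable_of_tendsto atTop (fun n => (hFc n).stronglyMeasurable)
    (tendsto_pi_nhds.2 fun s => slope_aux hv hα x e hne h0 s)

theorem psiF_intInt (hv : ContDiff ℝ 1 (fun p : ℝ × V3 => v p.1 p.2)) (hα : IsFlowMap v t₀ α)
    (x e : V3) (c d : ℝ) : IntervalIntegrable (psiF v α x e) volume c d := by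
  set a := min c (min d t₀) with hsa
  set b := max c (max d t₀) with hsb
  obtain ⟨M, hM0, hMb, _⟩ := psiF_props hv hα x e a b
    (le_trans (min_le_right _ _) (min_le_right _ _))
    (le_trans (le_max_right _ _) (le_max_right _ _))
  rw [intervalIntegrable_iff]
  have hab : Set.uIoc c d ⊆ Icc a b := by
    intro s hs
    have h₁ : a ≤ min c d := le_inf inf_le_left ((inf_le_right).trans inf_le_left)
    have h₂ : max c d ≤ b := sup_le le_sup_left (le_trans le_sup_left le_sup_right)
    exact ⟨h₁.trans hs.1.le, hs.2.trans h₂⟩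
  refine Measure.integrableOn_of_bounded (M := M) (measure_Ioc_lt_top).ne
    (psiF_meas hv hα x e).aestronglyMeasurable ?_
  exact ae_restrict_of_forall_mem measurableSet_uIoc fun s hs => hMb s (hab hs)

theorem A_ident (hv : ContDiff ℝ 1 (fun p : ℝ × V3 => v p.1 p.2)) (hα : IsFlowMap v t₀ α)
    (x e : V3) (t : ℝ) :
    fderiv ℝ (α t) x e = e + ∫ s in t₀..t, psiF v α x e s := by
  obtain ⟨M, _, _, hid⟩ := psiF_props hv hα x e (min t t₀) (max t t₀)
    (min_le_right _ _) (le_max_right _ _)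
  exact hid t ⟨min_le_left _ _, le_max_left _ _⟩

theorem A_e_cont (hv : ContDiff ℝ 1 (fun p : ℝ × V3 => v p.1 p.2)) (hα : IsFlowMap v t₀ α)
    (x e : V3) : Continuous (fun t => fderiv ℝ (α t) x e) := by
  have : (fun t => fderiv ℝ (α t) x e) = fun t => e + ∫ s in t₀..t, psiF v α x e s :=
    funext fun t => A_ident hv hα x e t
  rw [this]
  exact continuous_const.add
    (intervalIntegral.continuous_primitive (fun c d => psiF_intInt hv hα x e c d) t₀)

theorem psiF_cont (hv : ContDiff ℝ 1 (fun p : ℝ × V3 => v p.1 p.2)) (hα : IsFlowMap v t₀ α)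
    (x e : V3) : Continuous (psiF v α x e) := by
  have h1 : Continuous (fun s => pB (fun p : ℝ × V3 => v p.1 p.2) s (α s x)) :=
    (continuous_pB hv).comp (continuous_id.prodMk
      ((alpha_cont hv hα).comp (continuous_id.prodMk continuous_const)))
  exact h1.clm_apply (A_e_cont hv hα x e)

theorem A_e_hasDerivAt (hv : ContDiff ℝ 1 (fun p : ℝ × V3 => v p.1 p.2))
    (hα : IsFlowMap v t₀ α) (x e : V3) (t : ℝ) :
    HasDerivAt (fun s => fderiv ℝ (α s) x e)
      (pB (fun p : ℝ × V3 => v p.1 p.2) t (α t x) (fderiv ℝ (α t) x e)) t := by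
  have heq : (fun s => fderiv ℝ (α s) x e) = fun s => e + ∫ u in t₀..s, psiF v α x e u :=
    funext fun s => A_ident hv hα x e s
  rw [heq]
  have := (intervalIntegral.integral_hasDerivAt_right (psiF_intInt hv hα x e t₀ t)
    ((psiF_cont hv hα x e).stronglyMeasurable.stronglyMeasurableAtFilter)
    (psiF_cont hv hα x e).continuousAt).const_add e
  exact this

end C6

section C7
theorem clm_apply_eq_sum (T : V3 →L[ℝ] V3) (w : V3) (i : Fin 3) :
    T w i = ∑ k, w k * T (Pi.single k 1) i := by
  have hw : w = ∑ k, w k • (Pi.single k 1 : V3) := by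
    funext j
    rw [Finset.sum_apply]
    simp [Pi.single_apply, mul_ite, Finset.sum_ite_eq']
  conv_lhs => rw [hw]
  rw [map_sum]
  rw [Finset.sum_apply]
  simp [smul_eq_mul]

/-- Jacobi's formula in dimension 3 for a matrix path satisfying `m' = b * m`. -/
theorem jacobi3 {m : ℝ → Matrix (Fin 3) (Fin 3) ℝ} {b : Matrix (Fin 3) (Fin 3) ℝ} {t : ℝ}
    (hm : ∀ i j, HasDerivAt (fun s => m s i j) ((b * m t) i j) t) :
    HasDerivAt (fun s => (m s).det) (b.trace * (m t).det) t := by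
  have h1 := ((hm 0 0).mul ((hm 1 1).mul (hm 2 2)))
  have h2 := ((hm 0 0).mul ((hm 1 2).mul (hm 2 1)))
  have h3 := ((hm 0 1).mul ((hm 1 0).mul (hm 2 2)))
  have h4 := ((hm 0 1).mul ((hm 1 2).mul (hm 2 0)))
  have h5 := ((hm 0 2).mul ((hm 1 0).mul (hm 2 1)))
  have h6 := ((hm 0 2).mul ((hm 1 1).mul (hm 2 0)))
  have h := ((((h1.sub h2).sub h3).add h4).add h5).sub h6
  have hfun : (fun s => (m s).det) = fun s =>
      m s 0 0 * (m s 1 1 * m s 2 2) - m s 0 0 * (m s 1 2 * m s 2 1)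
      - m s 0 1 * (m s 1 0 * m s 2 2) + m s 0 1 * (m s 1 2 * m s 2 0)
      + m s 0 2 * (m s 1 0 * m s 2 1) - m s 0 2 * (m s 1 1 * m s 2 0) := by
    funext s
    rw [Matrix.det_fin_three]
    ring
  rw [hfun]
  refine h.congr_deriv ?_
  simp only [Matrix.trace, Matrix.diag, Matrix.det_fin_three, Matrix.mul_apply,
    Fin.sum_univ_three, Pi.mul_apply]
  ring


def Amat (α : ℝ → V3 → V3) (t : ℝ) (y : V3) : Matrix (Fin 3) (Fin 3) ℝ :=
  Matrix.of fun i j => fderiv ℝ (α t) y (Pi.single j 1) i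

def Jdet (α : ℝ → V3 → V3) (t : ℝ) (y : V3) : ℝ := (Amat α t y).det

def dvg (v : ℝ → V3 → V3) (t : ℝ) (x : V3) : ℝ := ∑ a, pd (fun z => v t z a) a x

variable {v : ℝ → V3 → V3} {t₀ : ℝ} {α : ℝ → V3 → V3}

theorem pd_eq (hv : ContDiff ℝ 1 (fun p : ℝ × V3 => v p.1 p.2)) (t : ℝ) (x : V3) (a : Fin 3) :
    pd (fun z => v t z a) a x = pB (fun p : ℝ × V3 => v p.1 p.2) t x (Pi.single a 1) a := by
  have h := hasFDerivAt_partial hv t x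
  have hcomp : HasFDerivAt (fun z => v t z a)
      ((ContinuousLinearMap.proj (R := ℝ) (φ := fun _ : Fin 3 => ℝ) a).comp
        (pB (fun p : ℝ × V3 => v p.1 p.2) t x)) x :=
    (ContinuousLinearMap.proj (R := ℝ) (φ := fun _ : Fin 3 => ℝ) a).hasFDerivAt.comp x h
  rw [pd, hcomp.fderiv]
  rfl

theorem J_hasDeriv (hv : ContDiff ℝ 1 (fun p : ℝ × V3 => v p.1 p.2)) (hα : IsFlowMap v t₀ α)
    (y : V3) (t : ℝ) :
    HasDerivAt (fun s => Jdet α s y) (dvg v t (α t y) * Jdet α t y) t := by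
  set b : Matrix (Fin 3) (Fin 3) ℝ :=
    Matrix.of fun i k => pB (fun p : ℝ × V3 => v p.1 p.2) t (α t y) (Pi.single k 1) i with hb
  have hm : ∀ i j, HasDerivAt (fun s => Amat α s y i j) ((b * Amat α t y) i j) t := by
    intro i j
    have h0 := A_e_hasDerivAt hv hα y (Pi.single j 1) t
    have hpj : HasFDerivAt (fun w : V3 => w i)
        (ContinuousLinearMap.proj (R := ℝ) (φ := fun _ : Fin 3 => ℝ) i)
        (fderiv ℝ (α t) y (Pi.single j 1)) :=
      (ContinuousLinearMap.proj (R := ℝ) (φ := fun _ : Fin 3 => ℝ) i).hasFDerivAt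
    have hproj := hpj.comp_hasDerivAt t h0
    have hval : (b * Amat α t y) i j
        = pB (fun p : ℝ × V3 => v p.1 p.2) t (α t y) (fderiv ℝ (α t) y (Pi.single j 1)) i := by
      rw [Matrix.mul_apply, clm_apply_eq_sum]
      refine Finset.sum_congr rfl fun k _ => ?_
      simp only [hb, Amat, Matrix.of_apply]
      ring
    rw [hval]
    exact hproj
  have hdet := jacobi3 hm
  have htr : dvg v t (α t y) = b.trace := by
    rw [Matrix.trace]
    refine Finset.sum_congr rfl fun a _ => ?_
    rw [pd_eq hv]
    rfl
  have hfun : (fun s => Jdet α s y) = fun s => (Amat α s y).det := rfl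
  rw [hfun, htr]
  exact hdet
end C7

section C8
variable {v : ℝ → V3 → V3} {t₀ : ℝ} {α : ℝ → V3 → V3}

theorem detA_eq (t : ℝ) (y : V3) :
    ContinuousLinearMap.det (fderiv ℝ (α t) y) = Jdet α t y := by
  rw [ContinuousLinearMap.det, ← LinearMap.det_toMatrix' ((fderiv ℝ (α t) y) : V3 →ₗ[ℝ] V3)]
  unfold Jdet Amat
  congr 1

theorem Jdet_t₀ (hα : IsFlowMap v t₀ α) (y : V3) : Jdet α t₀ y = 1 := by
  have h0 : α t₀ = id := funext hα.1
  unfold Jdet Amat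
  rw [h0, fderiv_id]
  have : (Matrix.of fun i j => (ContinuousLinearMap.id ℝ V3) (Pi.single j 1) i)
      = (1 : Matrix (Fin 3) (Fin 3) ℝ) := by
    ext i j
    simp [Matrix.one_apply, Pi.single_apply, eq_comm]
  rw [this, Matrix.det_one]

theorem Jdet_cont_t (hv : ContDiff ℝ 1 (fun p : ℝ × V3 => v p.1 p.2))
    (hα : IsFlowMap v t₀ α) (y : V3) : Continuous (fun t => Jdet α t y) := by
  have hc : ∀ i j : Fin 3, Continuous (fun t => Amat α t y i j) :=
    fun i j => (continuous_apply i).comp (A_e_cont hv hα y (Pi.single j 1))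
  have hfun : (fun t => Jdet α t y) = fun t =>
      Amat α t y 0 0 * (Amat α t y 1 1 * Amat α t y 2 2)
      - Amat α t y 0 0 * (Amat α t y 1 2 * Amat α t y 2 1)
      - Amat α t y 0 1 * (Amat α t y 1 0 * Amat α t y 2 2)
      + Amat α t y 0 1 * (Amat α t y 1 2 * Amat α t y 2 0)
      + Amat α t y 0 2 * (Amat α t y 1 0 * Amat α t y 2 1)
      - Amat α t y 0 2 * (Amat α t y 1 1 * Amat α t y 2 0) := by
    funext s
    rw [Jdet, Matrix.det_fin_three]
    ring
  rw [hfun]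
  exact ((((((hc 0 0).mul ((hc 1 1).mul (hc 2 2))).sub
    ((hc 0 0).mul ((hc 1 2).mul (hc 2 1)))).sub
    ((hc 0 1).mul ((hc 1 0).mul (hc 2 2)))).add
    ((hc 0 1).mul ((hc 1 2).mul (hc 2 0)))).add
    ((hc 0 2).mul ((hc 1 0).mul (hc 2 1)))).sub
    ((hc 0 2).mul ((hc 1 1).mul (hc 2 0)))

theorem Jdet_ne (hα : IsFlowMap v t₀ α) (t : ℝ) (y : V3) : Jdet α t y ≠ 0 := by
  obtain ⟨h1, h2, h3⟩ := hα
  obtain ⟨hbij, hcd, hcdinv⟩ := h2 t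
  set g := Function.invFun (α t) with hg
  have hgl : Function.LeftInverse g (α t) := Function.leftInverse_invFun hbij.injective
  have hA : HasFDerivAt (α t) (fderiv ℝ (α t) y) y :=
    (hcd.differentiable one_ne_zero y).hasFDerivAt
  have hDg : HasFDerivAt g (fderiv ℝ g (α t y)) (α t y) :=
    (hcdinv.differentiable one_ne_zero (α t y)).hasFDerivAt
  have hcomp : HasFDerivAt (fun w => g (α t w))
      ((fderiv ℝ g (α t y)).comp (fderiv ℝ (α t) y)) y := hDg.comp y hA
  have hid : (fun w => g (α t w)) = id := funext fun w => hgl w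
  rw [hid] at hcomp
  have huniq : (fderiv ℝ g (α t y)).comp (fderiv ℝ (α t) y)
      = ContinuousLinearMap.id ℝ V3 := hcomp.unique (hasFDerivAt_id y)
  have hdet : ContinuousLinearMap.det ((fderiv ℝ g (α t y)).comp (fderiv ℝ (α t) y)) = 1 := by
    rw [huniq, ContinuousLinearMap.det, ContinuousLinearMap.coe_id, LinearMap.det_id]
  rw [ContinuousLinearMap.det] at hdet
  have hmul : LinearMap.det ((fderiv ℝ g (α t y) : V3 →ₗ[ℝ] V3).comp
      ((fderiv ℝ (α t) y : V3 →ₗ[ℝ] V3)))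
      = LinearMap.det (fderiv ℝ g (α t y) : V3 →ₗ[ℝ] V3)
        * LinearMap.det ((fderiv ℝ (α t) y : V3 →ₗ[ℝ] V3)) := LinearMap.det_comp _ _
  rw [ContinuousLinearMap.toLinearMap_comp] at hdet
  rw [hmul] at hdet
  have := detA_eq (α := α) t y
  rw [ContinuousLinearMap.det] at this
  intro hcontra
  rw [this, hcontra, mul_zero] at hdet
  exact absurd hdet (by norm_num)

theorem Jdet_pos (hv : ContDiff ℝ 1 (fun p : ℝ × V3 => v p.1 p.2))
    (hα : IsFlowMap v t₀ α) (t : ℝ) (y : V3) : 0 < Jdet α t y := by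
  by_contra hle
  push_neg at hle
  have hlt : Jdet α t y < 0 := lt_of_le_of_ne hle (Jdet_ne hα t y)
  have hc : ContinuousOn (fun s => Jdet α s y) (uIcc t t₀) :=
    (Jdet_cont_t hv hα y).continuousOn
  have h0mem : (0 : ℝ) ∈ uIcc (Jdet α t y) (Jdet α t₀ y) := by
    rw [Jdet_t₀ hα y]
    exact ⟨le_trans (min_le_left _ _) hle, le_trans zero_le_one (le_max_right _ _)⟩
  obtain ⟨s, _, hs0⟩ := intermediate_value_uIcc hc h0mem
  exact Jdet_ne hα s y hs0

theorem cov (hα : IsFlowMap v t₀ α) (hv : ContDiff ℝ 1 (fun p : ℝ × V3 => v p.1 p.2))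
    {G : Set V3} (hG : MeasurableSet G) (t : ℝ) (g : V3 → ℝ) :
    ∫ x in α t '' G, g x = ∫ y in G, Jdet α t y * g (α t y) := by
  have hf' : ∀ y ∈ G, HasFDerivWithinAt (α t) (fderiv ℝ (α t) y) G y :=
    fun y _ => (((hα.2.1 t).2.1.differentiable one_ne_zero y).hasFDerivAt).hasFDerivWithinAt
  rw [integral_image_eq_integral_abs_det_fderiv_smul volume hG hf'
    ((hα.2.1 t).1.injective.injOn) g]
  refine setIntegral_congr_fun hG fun y _ => ?_
  rw [detA_eq, abs_of_pos (Jdet_pos hv hα t y), smul_eq_mul]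
end C8

section C9
variable {v : ℝ → V3 → V3} {t₀ : ℝ} {α : ℝ → V3 → V3}

/-- uniform bound for the flow derivative on compact time interval × bounded set -/
theorem A_bound (hv : ContDiff ℝ 1 (fun p : ℝ × V3 => v p.1 p.2)) (hα : IsFlowMap v t₀ α)
    {G : Set V3} (hGb : Bornology.IsBounded G) (a b : ℝ) (e : V3) :
    ∃ M, 0 ≤ M ∧ ∀ t ∈ Icc a b, ∀ y ∈ closure G, ‖fderiv ℝ (α t) y e‖ ≤ M := by
  set a' := min a t₀ with ha'
  set b' := max b t₀ with hb'
  have hab' : a' ≤ b' := le_trans (min_le_right _ _) (le_max_right _ _)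
  have hK : IsCompact ((fun p : ℝ × V3 => α p.1 p.2) '' (Icc a' b' ×ˢ closure G)) :=
    ((isCompact_Icc).prod hGb.isCompact_closure).image (alpha_cont hv hα)
  obtain ⟨L, hL⟩ := (isCompact_Icc.prod hK).exists_bound_of_continuousOn
    ((continuous_pB hv).continuousOn)
  set K0 := max L 0 with hK0
  refine ⟨‖e‖ * Real.exp (K0 * (b' - a')), by positivity, ?_⟩
  intro t ht y hy
  have htmem : t ∈ Icc a' b' := ⟨le_trans (min_le_left _ _) ht.1, le_trans ht.2 (le_max_left _ _)⟩
  have ht₀mem : t₀ ∈ Icc a' b' := ⟨min_le_right _ _, le_max_right _ _⟩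
  have hsub : uIcc t₀ t ⊆ Icc a' b' := (ordConnected_Icc).uIcc_subset ht₀mem htmem
  have hgr := gronwall_two (f := fun s => fderiv ℝ (α s) y e) (f' := psiF v α y e)
    (t₀ := t₀) (t := t) (K := K0) (δ := ‖e‖)
    (fun s _ => A_e_hasDerivAt hv hα y e s) ?_ ?_
  · refine le_trans hgr ?_
    have habs : |t - t₀| ≤ b' - a' := by
      rw [abs_le]
      constructor <;> [linarith [htmem.1, ht₀mem.2]; linarith [htmem.2, ht₀mem.1]]
    exact mul_le_mul_of_nonneg_left
      (Real.exp_le_exp.2 (mul_le_mul_of_nonneg_left habs (le_max_right _ _)))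
      (norm_nonneg e)
  · intro s hs
    have hmem : (s, α s y) ∈ Icc a' b' ×ˢ ((fun p : ℝ × V3 => α p.1 p.2) '' (Icc a' b' ×ˢ closure G)) :=
      ⟨hsub hs, ⟨(s, y), ⟨hsub hs, hy⟩, rfl⟩⟩
    have hop := hL (s, α s y) hmem
    calc ‖psiF v α y e s‖
        ≤ ‖pB (fun p : ℝ × V3 => v p.1 p.2) s (α s y)‖ * ‖fderiv ℝ (α s) y e‖ :=
          ContinuousLinearMap.le_opNorm _ _
      _ ≤ K0 * ‖fderiv ℝ (α s) y e‖ :=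
          mul_le_mul_of_nonneg_right (le_trans hop (le_max_left _ _)) (norm_nonneg _)
  · show ‖fderiv ℝ (α t₀) y e‖ ≤ ‖e‖
    have h0 : α t₀ = id := funext hα.1
    rw [h0, fderiv_id]
    simp

theorem Jdet_bound (hv : ContDiff ℝ 1 (fun p : ℝ × V3 => v p.1 p.2)) (hα : IsFlowMap v t₀ α)
    {G : Set V3} (hGb : Bornology.IsBounded G) (a b : ℝ) :
    ∃ M, 0 ≤ M ∧ ∀ t ∈ Icc a b, ∀ y ∈ closure G, |Jdet α t y| ≤ M := by
  obtain ⟨M0, hM00, hM0⟩ := A_bound hv hα hGb a b (Pi.single 0 1)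
  obtain ⟨M1, hM10, hM1⟩ := A_bound hv hα hGb a b (Pi.single 1 1)
  obtain ⟨M2, hM20, hM2⟩ := A_bound hv hα hGb a b (Pi.single 2 1)
  set q := max M0 (max M1 M2) with hq
  have hq0 : 0 ≤ q := le_trans hM00 (le_max_left _ _)
  refine ⟨6 * q ^ 3, by positivity, ?_⟩
  intro t ht y hy
  have hent : ∀ i j : Fin 3, |Amat α t y i j| ≤ q := by
    intro i j
    have hcol : ‖fderiv ℝ (α t) y (Pi.single j 1)‖ ≤ q := by
      fin_cases j
      · exact le_trans (hM0 t ht y hy) (le_max_left _ _)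
      · exact le_trans (hM1 t ht y hy) (le_trans (le_max_left _ _) (le_max_right _ _))
      · exact le_trans (hM2 t ht y hy) (le_trans (le_max_right _ _) (le_max_right _ _))
    calc |Amat α t y i j| = ‖(fderiv ℝ (α t) y (Pi.single j 1)) i‖ := rfl
      _ ≤ ‖fderiv ℝ (α t) y (Pi.single j 1)‖ := norm_le_pi_norm _ i
      _ ≤ q := hcol
  have habs : ∀ x1 x2 x3 : ℝ, |x1| ≤ q → |x2| ≤ q → |x3| ≤ q → |x1 * (x2 * x3)| ≤ q ^ 3 := by
    intro x1 x2 x3 h1 h2 h3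
    rw [abs_mul, abs_mul]
    have hq0' : (0:ℝ) ≤ q := hq0
    have k23 : |x2| * |x3| ≤ q * q := mul_le_mul h2 h3 (abs_nonneg x3) hq0'
    have k : |x1| * (|x2| * |x3|) ≤ q * (q * q) :=
      mul_le_mul h1 k23 (mul_nonneg (abs_nonneg _) (abs_nonneg _)) hq0'
    calc |x1| * (|x2| * |x3|) ≤ q * (q * q) := k
      _ = q ^ 3 := by ring
  have h1 := habs _ _ _ (hent 0 0) (hent 1 1) (hent 2 2)
  have h2 := habs _ _ _ (hent 0 0) (hent 1 2) (hent 2 1)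
  have h3 := habs _ _ _ (hent 0 1) (hent 1 0) (hent 2 2)
  have h4 := habs _ _ _ (hent 0 1) (hent 1 2) (hent 2 0)
  have h5 := habs _ _ _ (hent 0 2) (hent 1 0) (hent 2 1)
  have h6 := habs _ _ _ (hent 0 2) (hent 1 1) (hent 2 0)
  have hdf : Jdet α t y =
      Amat α t y 0 0 * (Amat α t y 1 1 * Amat α t y 2 2)
      - Amat α t y 0 0 * (Amat α t y 1 2 * Amat α t y 2 1)
      - Amat α t y 0 1 * (Amat α t y 1 0 * Amat α t y 2 2)
      + Amat α t y 0 1 * (Amat α t y 1 2 * Amat α t y 2 0)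
      + Amat α t y 0 2 * (Amat α t y 1 0 * Amat α t y 2 1)
      - Amat α t y 0 2 * (Amat α t y 1 1 * Amat α t y 2 0) := by
    rw [Jdet, Matrix.det_fin_three]; ring
  rw [hdf]
  rw [abs_le]
  constructor
  · nlinarith [neg_abs_le (Amat α t y 0 0 * (Amat α t y 1 1 * Amat α t y 2 2)),
      le_abs_self (Amat α t y 0 0 * (Amat α t y 1 2 * Amat α t y 2 1)),
      le_abs_self (Amat α t y 0 1 * (Amat α t y 1 0 * Amat α t y 2 2)),
      neg_abs_le (Amat α t y 0 1 * (Amat α t y 1 2 * Amat α t y 2 0)),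
      neg_abs_le (Amat α t y 0 2 * (Amat α t y 1 0 * Amat α t y 2 1)),
      le_abs_self (Amat α t y 0 2 * (Amat α t y 1 1 * Amat α t y 2 0))]
  · nlinarith [le_abs_self (Amat α t y 0 0 * (Amat α t y 1 1 * Amat α t y 2 2)),
      neg_abs_le (Amat α t y 0 0 * (Amat α t y 1 2 * Amat α t y 2 1)),
      neg_abs_le (Amat α t y 0 1 * (Amat α t y 1 0 * Amat α t y 2 2)),
      le_abs_self (Amat α t y 0 1 * (Amat α t y 1 2 * Amat α t y 2 0)),
      le_abs_self (Amat α t y 0 2 * (Amat α t y 1 0 * Amat α t y 2 1)),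
      neg_abs_le (Amat α t y 0 2 * (Amat α t y 1 1 * Amat α t y 2 0))]

theorem dvg_cont (hv : ContDiff ℝ 1 (fun p : ℝ × V3 => v p.1 p.2)) :
    Continuous (fun p : ℝ × V3 => dvg v p.1 p.2) := by
  have hfun : (fun p : ℝ × V3 => dvg v p.1 p.2)
      = fun p : ℝ × V3 => ∑ a : Fin 3,
          pB (fun q : ℝ × V3 => v q.1 q.2) p.1 p.2 (Pi.single a 1) a := by
    funext p
    exact Finset.sum_congr rfl fun a _ => pd_eq hv p.1 p.2 a
  rw [hfun]
  refine continuous_finset_sum _ fun a _ => ?_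
  exact (continuous_apply a).comp ((continuous_pB hv).clm_apply continuous_const)

/-- pointwise conservation of mass along trajectories -/
theorem mass_const (hv : ContDiff ℝ 1 (fun p : ℝ × V3 => v p.1 p.2)) (hα : IsFlowMap v t₀ α)
    {ρ : ℝ → V3 → ℝ} (hρ : ContDiff ℝ 1 (fun p : ℝ × V3 => ρ p.1 p.2))
    (hcont : ∀ t x, deriv (fun s => ρ s x) t + ∑ b, v t x b * pd (ρ t) b x
      = - ρ t x * ∑ a, pd (fun y => v t y a) a x)
    (y : V3) (t : ℝ) :
    ρ t (α t y) * Jdet α t y = ρ t₀ y := by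
  set f : ℝ → ℝ := fun t => ρ t (α t y) * Jdet α t y with hf
  have hfd : ∀ u : ℝ, HasDerivAt f 0 u := by
    intro u
    set x := α u y with hx
    -- derivative of t ↦ ρ (t, α t y)
    have hcurve : HasDerivAt (fun s => ρ s (α s y))
        (pT (fun p : ℝ × V3 => ρ p.1 p.2) u x
          + pB (fun p : ℝ × V3 => ρ p.1 p.2) u x (v u x)) u :=
      hasDerivAt_curve hρ (hα.2.2 u y)
    -- identify with continuity equation
    have hpT : pT (fun p : ℝ × V3 => ρ p.1 p.2) u x = deriv (fun s => ρ s x) u := by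
      have hc : HasDerivAt (fun s : ℝ => ρ s x)
          (pT (fun p : ℝ × V3 => ρ p.1 p.2) u x
            + pB (fun p : ℝ × V3 => ρ p.1 p.2) u x 0) u :=
        hasDerivAt_curve hρ (hasDerivAt_const u x)
      rw [map_zero, add_zero] at hc
      exact hc.deriv.symm
    have hpB : pB (fun p : ℝ × V3 => ρ p.1 p.2) u x (v u x)
        = ∑ b, v u x b * pd (ρ u) b x := by
      -- scalar analogue of clm_apply_eq_sum
      have hw : v u x = ∑ k, v u x k • (Pi.single k 1 : V3) := by
        funext j
        rw [Finset.sum_apply]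
        simp [Pi.single_apply, mul_ite, Finset.sum_ite_eq']
      conv_lhs => rw [hw, map_sum]
      refine Finset.sum_congr rfl fun b _ => ?_
      rw [_root_.map_smul, smul_eq_mul]
      congr 1
      rw [pd]
      have hfd := hasFDerivAt_partial hρ u x
      have : fderiv ℝ (ρ u) x = pB (fun p : ℝ × V3 => ρ p.1 p.2) u x := hfd.fderiv
      rw [this]
    have hρd : HasDerivAt (fun s => ρ s (α s y)) (- ρ u x * dvg v u x) u := by
      have := hcont u x
      rw [hpT, hpB] at hcurve
      rw [show - ρ u x * dvg v u x
        = deriv (fun s => ρ s x) u + ∑ b, v u x b * pd (ρ u) b x from (this).symm]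
      exact hcurve
    have hJd : HasDerivAt (fun s => Jdet α s y) (dvg v u x * Jdet α u y) u :=
      J_hasDeriv hv hα y u
    have hmul := hρd.mul hJd
    have : - ρ u x * dvg v u x * Jdet α u y + ρ u (α u y) * (dvg v u x * Jdet α u y) = 0 := by
      rw [← hx]; ring
    rw [this] at hmul
    exact hmul
  have hconst : f t = f t₀ := by
    have hdiff : Differentiable ℝ f := fun u => (hfd u).differentiableAt
    have hder0 : ∀ u, deriv f u = 0 := fun u => (hfd u).deriv
    exact is_const_of_deriv_eq_zero hdiff hder0 t t₀
  rw [hf] at hconst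
  simp only at hconst
  rw [hconst, hα.1 y, Jdet_t₀ hα y, mul_one]
end C9

/-- Exact coarse-grained continuity equation: the volume-averaged density
`⟨ρ⟩(t)` of a solution of the continuity equation satisfies
`d/dt ⟨ρ⟩ = −⟨ρ⟩ ⟨div v⟩`. -/
theorem averaged_continuity_equation (v : ℝ → V3 → V3)
    (hv : ContDiff ℝ 1 (fun p : ℝ × V3 => v p.1 p.2))
    (t₀ : ℝ) (α : ℝ → V3 → V3) (hα : IsFlowMap v t₀ α)
    (ρ : ℝ → V3 → ℝ) (hρ : ContDiff ℝ 1 (fun p : ℝ × V3 => ρ p.1 p.2))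
    (hcont : ∀ t x, deriv (fun s => ρ s x) t + ∑ b, v t x b * pd (ρ t) b x
      = - ρ t x * ∑ a, pd (fun y => v t y a) a x)
    (G : Set V3) (hGo : IsOpen G) (hGb : Bornology.IsBounded G)
    (hGpos : 0 < volume G) (hGfin : volume G < ⊤) :
    ∀ t, HasDerivAt (avg α G ρ)
      (-(avg α G ρ t) * avg α G (fun s x => ∑ a, pd (fun y => v s y a) a x) t) t := by
  have hG : MeasurableSet G := hGo.measurableSet
  set Vfun : ℝ → ℝ := fun t => ∫ y in G, Jdet α t y with hVfun
  -- continuity of Jdet in y, for fixed t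
  have hJcy : ∀ t, Continuous (fun y => Jdet α t y) := by
    intro t
    have hfc : Continuous (fderiv ℝ (α t)) := (hα.2.1 t).2.1.continuous_fderiv one_ne_zero
    have hent : ∀ i j : Fin 3, Continuous fun y => Amat α t y i j :=
      fun i j => (continuous_apply i).comp (hfc.clm_apply continuous_const)
    exact (continuous_matrix hent).matrix_det
  -- integrability of Jdet on G
  have hJint : ∀ t, IntegrableOn (fun y => Jdet α t y) G volume := by
    intro t
    obtain ⟨M, hM0, hM⟩ := Jdet_bound hv hα hGb t t
    refine Measure.integrableOn_of_bounded (M := M) hGfin.ne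
      (hJcy t).aestronglyMeasurable ?_
    refine ae_restrict_of_forall_mem hG fun y hy => ?_
    rw [Real.norm_eq_abs]
    exact hM t ⟨le_rfl, le_rfl⟩ y (subset_closure hy)
  -- positivity of Vfun
  have hVpos : ∀ t, 0 < Vfun t := by
    intro t
    rw [hVfun]
    rw [setIntegral_pos_iff_support_of_nonneg_ae
      (Eventually.of_forall fun y => (Jdet_pos hv hα t y).le) (hJint t)]
    have hsupp : Function.support (fun y => Jdet α t y) = univ := by
      ext y
      simp [Function.mem_support, (Jdet_pos hv hα t y).ne']
    rw [hsupp, univ_inter]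
    exact hGpos
  -- volAt = Vfun
  have hvolAt : ∀ t, volAt α G t = Vfun t := by
    intro t
    have h1 : ∫ _x in α t '' G, (1 : ℝ) = (volume (α t '' G)).toReal := by
      rw [setIntegral_const, smul_eq_mul, mul_one]; rfl
    rw [volAt, ← h1, cov hα hv hG t (fun _ => 1), hVfun]
    simp only [mul_one]
  -- mass conservation
  have hmass : ∀ t, (∫ x in α t '' G, ρ t x) = ∫ y in G, ρ t₀ y := by
    intro t
    rw [cov hα hv hG t (ρ t)]
    exact setIntegral_congr_fun hG fun y _ => by
      rw [mul_comm]; exact mass_const hv hα hρ hcont y t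
  set m₀ : ℝ := ∫ y in G, ρ t₀ y with hm₀
  have havg : avg α G ρ = fun t => (Vfun t)⁻¹ * m₀ := by
    funext t
    rw [avg, hvolAt, hmass]
  -- derivative of Vfun
  have hVder : ∀ t₁, HasDerivAt Vfun (∫ y in G, dvg v t₁ (α t₁ y) * Jdet α t₁ y) t₁ := by
    intro t₁
    -- compact enclosure
    have hKc : IsCompact ((fun p : ℝ × V3 => α p.1 p.2) '' (Icc (t₁ - 1) (t₁ + 1) ×ˢ closure G)) :=
      ((isCompact_Icc).prod hGb.isCompact_closure).image (alpha_cont hv hα)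
    obtain ⟨D, hD⟩ := ((isCompact_Icc (a := t₁ - 1) (b := t₁ + 1)).prod hKc).exists_bound_of_continuousOn
      ((dvg_cont hv).continuousOn)
    obtain ⟨MJ, hMJ0, hMJ⟩ := Jdet_bound hv hα hGb (t₁ - 1) (t₁ + 1)
    have hball : Metric.ball t₁ 1 ⊆ Icc (t₁ - 1) (t₁ + 1) := by
      intro s hs
      rw [Metric.mem_ball, Real.dist_eq, abs_lt] at hs
      exact ⟨by linarith [hs.1], by linarith [hs.2]⟩
    have hbd : ∀ y ∈ G, ∀ t ∈ Metric.ball t₁ 1, ‖dvg v t (α t y) * Jdet α t y‖ ≤ (|D| + 1) * MJ := by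
      intro y hy t ht
      have htI : t ∈ Icc (t₁ - 1) (t₁ + 1) := hball ht
      have hdv : |dvg v t (α t y)| ≤ |D| + 1 := by
        have hmem : ((t : ℝ), α t y) ∈ Icc (t₁ - 1) (t₁ + 1) ×ˢ
            ((fun p : ℝ × V3 => α p.1 p.2) '' (Icc (t₁ - 1) (t₁ + 1) ×ˢ closure G)) :=
          ⟨htI, ⟨(t, y), ⟨htI, subset_closure hy⟩, rfl⟩⟩
        have := hD _ hmem
        rw [Real.norm_eq_abs] at this
        calc |dvg v t (α t y)| ≤ D := this
          _ ≤ |D| + 1 := by linarith [le_abs_self D]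
      rw [Real.norm_eq_abs, abs_mul]
      exact mul_le_mul hdv (hMJ t htI y (subset_closure hy)) (abs_nonneg _)
        (by positivity)
    have hres := hasDerivAt_integral_of_dominated_loc_of_deriv_le (μ := volume.restrict G)
      (F := fun t y => Jdet α t y) (F' := fun t y => dvg v t (α t y) * Jdet α t y)
      (x₀ := t₁) (bound := fun _ => (|D| + 1) * MJ) (s := Metric.ball t₁ 1) (Metric.ball_mem_nhds t₁ one_pos)
      (Eventually.of_forall fun t => (hJcy t).aestronglyMeasurable.restrict)
      (hJint t₁)
      ?_ ?_ ?_ ?_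
    · exact hres.2
    · -- measurability of F' t₁
      have hc1 : Continuous (fun y => dvg v t₁ (α t₁ y)) :=
        (dvg_cont hv).comp (continuous_const.prodMk
          ((alpha_cont hv hα).comp (continuous_const.prodMk continuous_id)))
      exact (hc1.mul (hJcy t₁)).aestronglyMeasurable.restrict
    · exact ae_restrict_of_forall_mem hG fun y hy => fun t ht => hbd y hy t ht
    · exact integrableOn_const hGfin.ne
    · exact ae_restrict_of_forall_mem hG fun y _ => fun t _ => J_hasDeriv hv hα y t
  -- finish
  intro t₁
  rw [havg]
  have havgdvg : avg α G (fun s x => ∑ a, pd (fun y => v s y a) a x) t₁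
      = (Vfun t₁)⁻¹ * (∫ y in G, dvg v t₁ (α t₁ y) * Jdet α t₁ y) := by
    rw [avg, hvolAt]
    congr 1
    have hrfl : (∫ x in α t₁ '' G, ∑ a, pd (fun y => v t₁ y a) a x)
        = ∫ x in α t₁ '' G, dvg v t₁ x := rfl
    rw [hrfl, cov hα hv hG t₁ (dvg v t₁)]
    exact setIntegral_congr_fun hG fun y _ => mul_comm _ _
  rw [havgdvg]
  have hd := ((hVder t₁).inv (hVpos t₁).ne').mul_const m₀
  refine hd.congr_deriv ?_
  have hne := (hVpos t₁).ne'
  field_simp
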